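/- (Permutation invariance of the infinite natural sum, used in Proposition 11(3) of the paper) For every sequence (γ_i)_{i∈ℕ} of ordinals and every bijection p : ℕ → ℕ, ∑#_{i∈ℕ} γ_i = ∑#_{i∈ℕ} γ_{p(i)}. -/

import Mathlib

/-- Natural addition on ordinals (removed from Mathlib; restored with its Mathlib definition of
December 2024). -/
noncomputable def Ordinal.nadd.{u} (a b : Ordinal.{u}) : Ordinal.{u} :=
  max (⨆ x : Set.Iio a, Order.succ (Ordinal.nadd x.1 b))
    (⨆ x : Set.Iio b, Order.succ (Ordinal.nadd a x.1))
termination_by (a, b)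
decreasing_by all_goals cases x; decreasing_tactic

namespace Ordinal

theorem nadd_le_iff' (a b c : Ordinal) :
    nadd a b ≤ c ↔ (∀ a' < a, nadd a' b < c) ∧ ∀ b' < b, nadd a b' < c := by
  rw [nadd, max_le_iff, Ordinal.iSup_le_iff, Ordinal.iSup_le_iff]
  simp [Order.succ_le_iff]

theorem lt_nadd_iff' (a b c : Ordinal) :
    c < nadd a b ↔ (∃ a' < a, c ≤ nadd a' b) ∨ ∃ b' < b, c ≤ nadd a b' := by
  rw [← not_le, nadd_le_iff', not_and_or]
  push_neg
  exact Iff.rfl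

theorem nadd_lt_nadd_left' {a a' : Ordinal} (h : a' < a) (b : Ordinal) : nadd a' b < nadd a b :=
  ((nadd_le_iff' a b _).1 le_rfl).1 a' h

theorem nadd_lt_nadd_right' (a : Ordinal) {b b' : Ordinal} (h : b' < b) : nadd a b' < nadd a b :=
  ((nadd_le_iff' a b _).1 le_rfl).2 b' h

theorem nadd_le_nadd_left' {a a' : Ordinal} (h : a' ≤ a) (b : Ordinal) : nadd a' b ≤ nadd a b := by
  rcases h.lt_or_eq with h | rfl
  · exact (nadd_lt_nadd_left' h b).le
  · exact le_rfl

theorem nadd_le_nadd_right' (a : Ordinal) {b b' : Ordinal} (h : b' ≤ b) : nadd a b' ≤ nadd a b := by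
  rcases h.lt_or_eq with h | rfl
  · exact (nadd_lt_nadd_right' a h).le
  · exact le_rfl

theorem nadd_comm' (a b : Ordinal) : nadd a b = nadd b a := by
  induction a using WellFoundedLT.induction generalizing b with
  | _ a iha =>
  induction b using WellFoundedLT.induction with
  | _ b ihb =>
  apply le_antisymm
  · rw [nadd_le_iff']
    refine ⟨fun a' h => ?_, fun b' h => ?_⟩
    · rw [iha a' h]; exact nadd_lt_nadd_right' b h
    · rw [ihb b' h]; exact nadd_lt_nadd_left' h a
  · rw [nadd_le_iff']
    refine ⟨fun b' h => ?_, fun a' h => ?_⟩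
    · rw [← ihb b' h]; exact nadd_lt_nadd_right' a h
    · rw [← iha a' h]; exact nadd_lt_nadd_left' h b

theorem nadd_zero' (a : Ordinal) : nadd a 0 = a := by
  induction a using WellFoundedLT.induction with
  | _ a iha =>
  apply le_antisymm
  · rw [nadd_le_iff']
    refine ⟨fun a' h => ?_, fun b' h => absurd h (not_lt_of_ge (zero_le (a := b')))⟩
    rw [iha a' h]; exact h
  · refine le_of_forall_lt fun a' h => ?_
    rw [← iha a' h]; exact nadd_lt_nadd_left' h 0

theorem nadd_assoc' (a b c : Ordinal) : nadd (nadd a b) c = nadd a (nadd b c) := by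
  induction a using WellFoundedLT.induction generalizing b c with
  | _ a iha =>
  induction b using WellFoundedLT.induction generalizing c with
  | _ b ihb =>
  induction c using WellFoundedLT.induction with
  | _ c ihc =>
  apply le_antisymm
  · rw [nadd_le_iff']
    refine ⟨fun x h => ?_, fun c' h => ?_⟩
    · rcases (lt_nadd_iff' a b x).1 h with ⟨a', ha, hx⟩ | ⟨b', hb, hx⟩
      · refine (nadd_le_nadd_left' hx c).trans_lt ?_
        rw [iha a' ha]; exact nadd_lt_nadd_left' ha _
      · refine (nadd_le_nadd_left' hx c).trans_lt ?_
        rw [ihb b' hb]; exact nadd_lt_nadd_right' a (nadd_lt_nadd_left' hb c)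
    · rw [ihc c' h]; exact nadd_lt_nadd_right' a (nadd_lt_nadd_right' b h)
  · rw [nadd_le_iff']
    refine ⟨fun a' h => ?_, fun x h => ?_⟩
    · rw [← iha a' h]; exact nadd_lt_nadd_left' (nadd_lt_nadd_left' h b) c
    · rcases (lt_nadd_iff' b c x).1 h with ⟨b', hb, hx⟩ | ⟨c', hc, hx⟩
      · refine (nadd_le_nadd_right' a hx).trans_lt ?_
        rw [← ihb b' hb]; exact nadd_lt_nadd_left' (nadd_lt_nadd_right' a hb) c
      · refine (nadd_le_nadd_right' a hx).trans_lt ?_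
        rw [← ihc c' hc]; exact nadd_lt_nadd_right' _ hc

end Ordinal

/-- Type synonym for ordinals with natural addition (removed from Mathlib). -/
def NatOrdinal.{u} : Type (u + 1) := Ordinal.{u}

noncomputable instance : LinearOrder NatOrdinal := inferInstanceAs (LinearOrder Ordinal)

noncomputable instance : Zero NatOrdinal := ⟨(0 : Ordinal)⟩

noncomputable instance : Add NatOrdinal := ⟨fun a b => Ordinal.nadd a b⟩

noncomputable instance : AddCommMonoid NatOrdinal where
  add_assoc a b c := Ordinal.nadd_assoc' a b c
  zero_add a := (Ordinal.nadd_comm' _ _).trans (Ordinal.nadd_zero' a)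
  add_zero a := Ordinal.nadd_zero' a
  add_comm a b := Ordinal.nadd_comm' a b
  nsmul := nsmulRec

instance : IsOrderedAddMonoid NatOrdinal where
  add_le_add_left a b h c := Ordinal.nadd_le_nadd_left' (a := b) (a' := a) h c

/-- The identity order isomorphism `Ordinal ≃o NatOrdinal`. -/
def Ordinal.toNatOrdinal : Ordinal ≃o NatOrdinal := ⟨Equiv.refl _, Iff.rfl⟩

/-- The identity order isomorphism `NatOrdinal ≃o Ordinal`. -/
def NatOrdinal.toOrdinal : NatOrdinal ≃o Ordinal := ⟨Equiv.refl _, Iff.rfl⟩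

@[simp]
theorem Ordinal.toNatOrdinal_toOrdinal' (a : NatOrdinal) :
    Ordinal.toNatOrdinal (NatOrdinal.toOrdinal a) = a := rfl

@[simp]
theorem NatOrdinal.toOrdinal_zero' : NatOrdinal.toOrdinal 0 = 0 := rfl

theorem Ordinal.nadd_eq_add (a b : Ordinal) :
    Ordinal.nadd a b = NatOrdinal.toOrdinal (Ordinal.toNatOrdinal a + Ordinal.toNatOrdinal b) := rfl

/-- Finite partial natural (Hessenberg) sums. -/
noncomputable def natSumPrefix (γ : ℕ → Ordinal) : ℕ → Ordinal
  | 0 => 0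
  | n + 1 => Ordinal.nadd (natSumPrefix γ n) (γ n)

/-- The infinite natural sum. -/
noncomputable def inatSum (γ : ℕ → Ordinal) : Ordinal := ⨆ n : ℕ, natSumPrefix γ n

open Ordinal in
lemma natSumPrefix_eq_sum (γ : ℕ → Ordinal) (n : ℕ) :
    natSumPrefix γ n = NatOrdinal.toOrdinal (∑ i ∈ Finset.range n, toNatOrdinal (γ i)) := by
  induction n with
  | zero => simp [natSumPrefix]
  | succ n ih =>
    rw [natSumPrefix, Finset.sum_range_succ, ih, nadd_eq_add]
    simp

open Ordinal in
lemma inatSum_perm_le (γ : ℕ → Ordinal) (p : ℕ → ℕ)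
    (hp : Function.Bijective p) : (inatSum fun i => γ (p i)) ≤ inatSum γ := by
  refine ciSup_le fun m => ?_
  have h1 : natSumPrefix (fun i => γ (p i)) m
      = NatOrdinal.toOrdinal (∑ i ∈ (Finset.range m).image p, toNatOrdinal (γ i)) := by
    rw [natSumPrefix_eq_sum, Finset.sum_image (fun a _ b _ h => hp.1 h)]
  obtain ⟨n, hn⟩ : ∃ n, (Finset.range m).image p ⊆ Finset.range n := by
    rcases ((Finset.range m).image p).bddAbove with ⟨b, hb⟩
    exact ⟨b + 1, fun x hx => Finset.mem_range.2 (Nat.lt_succ_of_le (hb hx))⟩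
  have h2 : natSumPrefix (fun i => γ (p i)) m ≤ natSumPrefix γ n := by
    rw [h1, natSumPrefix_eq_sum]
    exact OrderIso.monotone _ <| Finset.sum_le_sum_of_subset_of_nonneg hn
      (fun i _ _ => by exact_mod_cast zero_le (a := γ i))
  exact h2.trans (le_ciSup (Ordinal.bddAbove_range _) n)

/-- The infinite natural sum is invariant under permutations of the terms. -/
theorem inatSum_perm_invariant (γ : ℕ → Ordinal) (p : ℕ → ℕ)
    (hp : Function.Bijective p) : inatSum γ = inatSum fun i => γ (p i) := by
  refine le_antisymm ?_ (inatSum_perm_le γ p hp)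
  let e := Equiv.ofBijective p hp
  have : γ = fun i => (fun j => γ (p j)) (e.symm i) := by
    funext i
    show γ i = γ (p (e.symm i))
    rw [show p (e.symm i) = e (e.symm i) from rfl, e.apply_symm_apply]
  conv_lhs => rw [this]
  exact inatSum_perm_le (fun j => γ (p j)) e.symm e.symm.bijective
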